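/- arXiv:2509.08127 — 3 statements merged into one kernel-verified Lean document; each statement's English description precedes it below -/
import Mathlib

section
/- With A = [[−1, 1],[0, −1]], B = [[2n+1, n],[2, 1]], m₁ = Aⁿ⁺¹BAB and m₂ = Aⁿ⁺¹BA as above, let P₁ = [[1, 0],[2, 1]] and P₂ = [[1, −1],[1, 0]]. Then P₁·m₁·P₁⁻¹ = (−1)ⁿ·[[−1, −n],[0, −1]] and P₂·m₂·P₂⁻¹ = (−1)ⁿ·[[−1, −2],[0, −1]]. Consequently, for n ≥ 1, m₁ and m₂ are conjugate in SL(2,ℝ). -/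
set_option maxHeartbeats 1000000

lemma Apow (k : ℕ) : (!![-1, 1; 0, -1] : Matrix (Fin 2) (Fin 2) ℝ) ^ k
    = ((-1 : ℝ) ^ k) • !![1, -(k : ℝ); 0, 1] := by
  induction k with
  | zero => simp [Matrix.one_fin_two]
  | succ k ih =>
    rw [pow_succ, ih]
    push_cast
    ext i j
    fin_cases i <;> fin_cases j <;>
      simp [Matrix.smul_mul, Matrix.mul_fin_two, Matrix.smul_apply, pow_succ] <;> ring

/-- Conjugating m₁ and m₂ by P₁ = [[1,0],[2,1]] and P₂ = [[1,−1],[1,0]] puts them in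
upper-triangular parabolic form, and consequently m₁ and m₂ are SL(2,ℝ)-conjugate. -/
theorem pretzel_m1_m2_conjugate (n : ℕ) (hn : 1 ≤ n) :
    let A : Matrix (Fin 2) (Fin 2) ℝ := !![-1, 1; 0, -1]
    let B : Matrix (Fin 2) (Fin 2) ℝ := !![2 * (n : ℝ) + 1, (n : ℝ); 2, 1]
    let m₁ : Matrix (Fin 2) (Fin 2) ℝ := A ^ (n + 1) * B * A * B
    let m₂ : Matrix (Fin 2) (Fin 2) ℝ := A ^ (n + 1) * B * A
    let P₁ : Matrix (Fin 2) (Fin 2) ℝ := !![1, 0; 2, 1]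
    let P₂ : Matrix (Fin 2) (Fin 2) ℝ := !![1, -1; 1, 0]
    P₁ * m₁ * P₁⁻¹ = ((-1 : ℝ) ^ n) • !![-1, -(n : ℝ); 0, -1] ∧
    P₂ * m₂ * P₂⁻¹ = ((-1 : ℝ) ^ n) • !![-1, -2; 0, -1] ∧
    ∃ G : Matrix (Fin 2) (Fin 2) ℝ, G.det = 1 ∧ G * m₁ * G⁻¹ = m₂ := by
  intro A B m₁ m₂ P₁ P₂
  have hP1inv : P₁⁻¹ = !![1, 0; -2, 1] := by
    rw [Matrix.inv_def]
    simp [P₁, Matrix.adjugate_fin_two, Matrix.det_fin_two_of]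
  have hP2inv : P₂⁻¹ = !![0, 1; -1, 1] := by
    rw [Matrix.inv_def]
    simp [P₂, Matrix.adjugate_fin_two, Matrix.det_fin_two_of]
  have hApow : A ^ (n + 1) = ((-1 : ℝ) ^ (n+1)) • !![1, -((n:ℝ)+1); 0, 1] := by
    show (!![-1, 1; 0, -1] : Matrix (Fin 2) (Fin 2) ℝ) ^ (n+1) = _
    rw [Apow]; push_cast; ring_nf
  have h1 : P₁ * m₁ * P₁⁻¹ = ((-1 : ℝ) ^ n) • !![-1, -(n : ℝ); 0, -1] := by
    show P₁ * (A ^ (n+1) * B * A * B) * P₁⁻¹ = _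
    rw [hApow, hP1inv]
    ext i j
    fin_cases i <;> fin_cases j <;>
      simp [A, B, P₁, Matrix.smul_mul, Matrix.mul_smul, Matrix.mul_fin_two,
        Matrix.smul_apply, pow_succ] <;> ring
  have h2 : P₂ * m₂ * P₂⁻¹ = ((-1 : ℝ) ^ n) • !![-1, -2; 0, -1] := by
    show P₂ * (A ^ (n+1) * B * A) * P₂⁻¹ = _
    rw [hApow, hP2inv]
    ext i j
    fin_cases i <;> fin_cases j <;>
      simp [A, B, P₂, Matrix.smul_mul, Matrix.mul_smul, Matrix.mul_fin_two,
        Matrix.smul_apply, pow_succ] <;> ring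
  refine ⟨h1, h2, ?_⟩
  have hn0 : (0:ℝ) < n := by exact_mod_cast hn
  obtain ⟨t, ht0, ht2⟩ : ∃ t : ℝ, 0 < t ∧ t ^ 2 = 2 / n :=
    ⟨Real.sqrt (2 / n), Real.sqrt_pos.mpr (by positivity),
      Real.sq_sqrt (by positivity)⟩
  have hnt2 : (n:ℝ) * t ^ 2 = 2 := by
    rw [ht2]; field_simp
  have htn : (n:ℝ) * t = 2 * t⁻¹ := by
    rw [eq_comm, mul_inv_eq_iff_eq_mul₀ ht0.ne']
    nlinarith [hnt2]
  obtain ⟨D, hD⟩ : ∃ D : Matrix (Fin 2) (Fin 2) ℝ, D = !![t, 0; 0, t⁻¹] := ⟨_, rfl⟩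
  obtain ⟨G, hG⟩ : ∃ G : Matrix (Fin 2) (Fin 2) ℝ, G = P₂⁻¹ * D * P₁ := ⟨_, rfl⟩
  have hdet1 : IsUnit P₁.det := by simp [P₁, Matrix.det_fin_two_of]
  have hdet2 : IsUnit P₂.det := by simp [P₂, Matrix.det_fin_two_of]
  have hGdet : G.det = 1 := by
    rw [hG, Matrix.det_mul, Matrix.det_mul, hP2inv]
    rw [show (!![0, 1; -1, 1] : Matrix (Fin 2) (Fin 2) ℝ).det = 1 by
      rw [Matrix.det_fin_two_of]; norm_num]
    rw [show D.det = 1 by rw [hD, Matrix.det_fin_two_of]; field_simp; norm_num]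
    rw [show P₁.det = 1 by rw [Matrix.det_fin_two_of]; norm_num]
    norm_num
  refine ⟨G, hGdet, ?_⟩
  have e1 : P₁ * m₁ = (((-1 : ℝ) ^ n) • !![-1, -(n : ℝ); 0, -1]) * P₁ := by
    rw [← h1, Matrix.nonsing_inv_mul_cancel_right _ _ hdet1]
  have e2 : m₂ * P₂⁻¹ = P₂⁻¹ * (((-1 : ℝ) ^ n) • !![-1, -2; 0, -1]) := by
    rw [← h2]
    rw [show P₂ * m₂ * P₂⁻¹ = P₂ * (m₂ * P₂⁻¹) from mul_assoc _ _ _,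
      Matrix.nonsing_inv_mul_cancel_left _ _ hdet2]
  have eD : D * (((-1 : ℝ) ^ n) • !![-1, -(n : ℝ); 0, -1])
      = (((-1 : ℝ) ^ n) • !![-1, -2; 0, -1]) * D := by
    rw [Matrix.mul_smul, Matrix.smul_mul]
    congr 1
    ext i j
    fin_cases i <;> fin_cases j <;>
      simp [hD, Matrix.mul_fin_two] <;>
      first
        | ring1
        | linear_combination -htn
        | linear_combination htn
        | (field_simp; nlinarith [hnt2, ht0, hn0])
  have hGm : G * m₁ = m₂ * G := by
    calc G * m₁ = P₂⁻¹ * (D * (P₁ * m₁)) := by rw [hG]; simp only [mul_assoc]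
      _ = P₂⁻¹ * (D * ((((-1 : ℝ) ^ n) • !![-1, -(n : ℝ); 0, -1]) * P₁)) := by rw [e1]
      _ = P₂⁻¹ * ((((-1 : ℝ) ^ n) • !![-1, -2; 0, -1]) * D) * P₁ := by
          rw [← mul_assoc, ← mul_assoc, mul_assoc P₂⁻¹ D, eD]
      _ = (m₂ * P₂⁻¹) * D * P₁ := by rw [← mul_assoc, ← e2]
      _ = m₂ * G := by rw [hG]; simp only [mul_assoc]
  have hGu : IsUnit G.det := by rw [hGdet]; exact isUnit_one
  rw [hGm, Matrix.mul_nonsing_inv_cancel_right _ _ hGu]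
end

section
/- If G ∈ GL(2,ℝ) has det G = −1 and M ∈ SL(2,ℝ) is elliptic, then Δ(G·M·G⁻¹) and Δ(M) have opposite signs, where Δ(N) = N₁₂ − N₂₁. -/
set_option maxHeartbeats 1600000

theorem alg_key (a b c d p q r s : ℝ) (hG : a*d - b*c = -1) (hM : p*s - q*r = 1)
    (hell : (p+s)^2 < 4) :
    (q - r) * ((a^2+c^2)*q - (b^2+d^2)*r + (a*b+c*d)*(s-p)) > 0 := by
  have hsq : (a*d - b*c)^2 = 1 := by rw [hG]; ring
  have hAB : 0 < a^2+c^2+b^2+d^2 := by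
    nlinarith [sq_nonneg (a-d), sq_nonneg (b+c), sq_nonneg (a+d), sq_nonneg (b-c)]
  have key : (a^2+c^2+b^2+d^2) * ((q - r) * ((a^2+c^2)*q - (b^2+d^2)*r + (a*b+c*d)*(s-p)))
      = ((a^2+c^2+b^2+d^2)*(s-p)/2 + (a*b+c*d)*(q-r))^2
        + ((a^2+c^2)*q + (b^2+d^2)*r)^2 + (q-r)^2
        + (a^2+c^2+b^2+d^2)^2*(4-(p+s)^2)/4 := by
    linear_combination ((a^2+c^2+b^2+d^2)^2) * hM + (q-r)^2 * hsq
  have h7 : 0 < (a^2+c^2+b^2+d^2) * ((q - r) * ((a^2+c^2)*q - (b^2+d^2)*r + (a*b+c*d)*(s-p))) := by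
    rw [key]
    have := mul_pos (mul_pos hAB hAB) (by linarith : (0:ℝ) < 4 - (p+s)^2)
    nlinarith [sq_nonneg ((a^2+c^2+b^2+d^2)*(s-p)/2 + (a*b+c*d)*(q-r)),
      sq_nonneg ((a^2+c^2)*q + (b^2+d^2)*r), sq_nonneg (q-r)]
  rcases mul_pos_iff.mp h7 with ⟨_, h⟩ | ⟨h, _⟩
  · exact h
  · linarith

/-- Conjugation by a determinant −1 matrix flips the sign of Δ on elliptic matrices. -/
theorem det_neg_one_conj_flips_delta_sign
    (G M : Matrix (Fin 2) (Fin 2) ℝ)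
    (hG : G.det = -1) (hM : M.det = 1) (hell : |Matrix.trace M| < 2) :
    Real.sign ((G * M * G⁻¹) 0 1 - (G * M * G⁻¹) 1 0) =
      -Real.sign (M 0 1 - M 1 0) := by
  set a := G 0 0 with ha; set b := G 0 1 with hb; set c := G 1 0 with hc; set d := G 1 1 with hd
  set p := M 0 0 with hp; set q := M 0 1 with hq; set r := M 1 0 with hr; set s := M 1 1 with hs
  have hGd : a * d - b * c = -1 := by rw [ha, hb, hc, hd, ← Matrix.det_fin_two]; exact hG
  have hMd : p * s - q * r = 1 := by rw [hp, hq, hr, hs, ← Matrix.det_fin_two]; exact hM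
  have htr : (p + s)^2 < 4 := by
    have h1 : Matrix.trace M = p + s := by rw [Matrix.trace_fin_two]
    rw [h1] at hell
    rcases abs_lt.mp hell with ⟨h2, h3⟩
    nlinarith
  have hinv : G⁻¹ = (-1 : ℝ) • G.adjugate := by
    rw [Matrix.inv_def, hG]
    norm_num
  have hdelta : (G * M * G⁻¹) 0 1 - (G * M * G⁻¹) 1 0
      = -((a^2+c^2)*q - (b^2+d^2)*r + (a*b+c*d)*(s-p)) := by
    rw [hinv]
    simp [Matrix.mul_apply, Fin.sum_univ_two, Matrix.adjugate_fin_two,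
      ← ha, ← hb, ← hc, ← hd, ← hp, ← hq, ← hr, ← hs]
    ring
  have hkey := alg_key a b c d p q r s hGd hMd htr
  rw [hdelta]
  rcases lt_trichotomy (q - r) 0 with hqr | hqr | hqr
  · have hf : (a^2+c^2)*q - (b^2+d^2)*r + (a*b+c*d)*(s-p) < 0 := by
      rcases mul_pos_iff.mp hkey with ⟨h1, _⟩ | ⟨_, h2⟩
      · linarith
      · exact h2
    rw [Real.sign_of_pos (by linarith), Real.sign_of_neg hqr]
    norm_num
  · exfalso; rw [hqr] at hkey; simp at hkey
  · have hf : 0 < (a^2+c^2)*q - (b^2+d^2)*r + (a*b+c*d)*(s-p) := by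
      rcases mul_pos_iff.mp hkey with ⟨_, h1⟩ | ⟨h2, _⟩
      · exact h1
      · linarith
    rw [Real.sign_of_neg (by linarith), Real.sign_of_pos hqr]
end

section
/- Two irreducible representations ρ₁, ρ₂ : G → SL(2,ℝ) of a group G with equal character (tr ρ₁(g) = tr ρ₂(g) for all g ∈ G) are conjugate by a matrix in GL(2,ℝ), whose determinant may be taken to be either +1 or −1 (after scaling). -/
set_option maxHeartbeats 1000000
open Matrix
namespace GoldmanAux


abbrev M2 := Matrix (Fin 2) (Fin 2) ℝ

lemma trace2 (A : M2) : Matrix.trace A = A 0 0 + A 1 1 := by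
  simp [Matrix.trace_fin_two]

lemma det2 (A : M2) : A.det = A 0 0 * A 1 1 - A 0 1 * A 1 0 := Matrix.det_fin_two A

lemma mulapp (A B : M2) (i j : Fin 2) : (A * B) i j = A i 0 * B 0 j + A i 1 * B 1 j := by
  rw [Matrix.mul_apply, Fin.sum_univ_two]

lemma cayley (A : M2) : A * A = (Matrix.trace A) • A - (A.det) • (1 : M2) := by
  ext i j
  fin_cases i <;> fin_cases j <;>
    simp [mulapp, trace2, det2, Matrix.one_apply] <;> ring

lemma sq_neg_one_trace {A : M2} (h : A * A = -1) : Matrix.trace A = 0 := by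
  have h00 := congrFun (congrFun h 0) 0
  have h01 := congrFun (congrFun h 0) 1
  simp [mulapp, Matrix.one_apply] at h00 h01
  rw [trace2]
  by_contra hne
  have ha : A 0 1 * (A 0 0 + A 1 1) = 0 := by linear_combination h01
  have ha2 : A 0 1 = 0 := by
    rcases mul_eq_zero.1 ha with h' | h'
    · exact h'
    · exact absurd h' hne
  rw [ha2] at h00
  nlinarith [sq_nonneg (A 0 0)]

lemma sq_neg_one_det {A : M2} (h : A * A = -1) : A.det = 1 := by
  have h00 := congrFun (congrFun h 0) 0
  simp [mulapp, Matrix.one_apply] at h00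
  have ht := sq_neg_one_trace h
  rw [trace2] at ht
  rw [det2]; linear_combination -h00 + A 0 0 * ht

lemma sq_neg_one_offdiag {A : M2} (h : A * A = -1) : A 1 0 ≠ 0 ∧ A 0 1 ≠ 0 := by
  have h00 := congrFun (congrFun h 0) 0
  simp [mulapp, Matrix.one_apply] at h00
  constructor <;> intro hz <;> rw [hz] at h00 <;> nlinarith [sq_nonneg (A 0 0)]


lemma vne {v : Fin 2 → ℝ} (h : v ≠ 0) : v 0 ≠ 0 ∨ v 1 ≠ 0 := by
  by_contra hc
  push_neg at hc
  exact h (funext fun i => by fin_cases i <;> simp [hc.1, hc.2])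

lemma colinear_of_det2 {u v : Fin 2 → ℝ} (h : u 0 * v 1 - u 1 * v 0 = 0) (hu : u ≠ 0) :
    ∃ c : ℝ, v = c • u := by
  rcases vne hu with h0 | h1
  · refine ⟨v 0 / u 0, funext fun i => ?_⟩
    fin_cases i <;> simp <;> field_simp <;> linarith
  · refine ⟨v 1 / u 1, funext fun i => ?_⟩
    fin_cases i <;> simp <;> field_simp <;> linarith

lemma cramer2 {u v : Fin 2 → ℝ} (h : u 0 * v 1 - u 1 * v 0 ≠ 0) (x : Fin 2 → ℝ) :
    ∃ a b : ℝ, x = a • u + b • v := by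
  refine ⟨(x 0 * v 1 - x 1 * v 0) / (u 0 * v 1 - u 1 * v 0),
    (u 0 * x 1 - u 1 * x 0) / (u 0 * v 1 - u 1 * v 0), funext fun i => ?_⟩
  have h' : v 1 * u 0 - v 0 * u 1 ≠ 0 := by intro hz; apply h; linarith
  fin_cases i <;> simp <;> field_simp <;> ring

lemma perp_of_dot {t x : Fin 2 → ℝ} (ht : t ≠ 0) (h : t 0 * x 0 + t 1 * x 1 = 0) :
    ∃ c : ℝ, x = c • ![t 1, -t 0] := by
  rcases vne ht with h0 | h1
  · refine ⟨-x 1 / t 0, funext fun i => ?_⟩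
    fin_cases i <;> simp <;> field_simp <;> linarith
  · refine ⟨x 0 / t 1, funext fun i => ?_⟩
    fin_cases i <;> simp <;> field_simp <;> linarith

lemma mulVec2 (A : M2) (v : Fin 2 → ℝ) (i : Fin 2) :
    (A.mulVec v) i = A i 0 * v 0 + A i 1 * v 1 := by
  simp [Matrix.mulVec, dotProduct, Fin.sum_univ_two]

lemma vecMul2 (A : M2) (v : Fin 2 → ℝ) (j : Fin 2) :
    (Matrix.vecMul v A) j = v 0 * A 0 j + v 1 * A 1 j := by
  simp [Matrix.vecMul, dotProduct, Fin.sum_univ_two]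

lemma mul_vecMulVec (A : M2) (u t : Fin 2 → ℝ) :
    A * vecMulVec u t = vecMulVec (A.mulVec u) t := by
  ext i j
  simp [mulapp, vecMulVec_apply, mulVec2]
  fin_cases i <;> simp <;> ring

lemma vecMulVec_mul (A : M2) (u t : Fin 2 → ℝ) :
    vecMulVec u t * A = vecMulVec u (Matrix.vecMul t A) := by
  ext i j
  simp [mulapp, vecMulVec_apply, vecMul2]
  ring

lemma vecMulVec_bilin (x y z w : Fin 2 → ℝ) (a b c d : ℝ) :
    vecMulVec (a • x + b • y) (c • z + d • w) =
      (a*c) • vecMulVec x z + (a*d) • vecMulVec x w + (b*c) • vecMulVec y z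
        + (b*d) • vecMulVec y w := by
  ext i j
  simp [vecMulVec_apply]
  ring


lemma rank_one_decomp {R : M2} (h0 : R ≠ 0) (hd : R.det = 0) :
    ∃ u t : Fin 2 → ℝ, u ≠ 0 ∧ t ≠ 0 ∧ R = vecMulVec u t := by
  rw [Matrix.det_fin_two] at hd
  have hR : ∃ i j, R i j ≠ 0 := by
    by_contra hc
    push_neg at hc
    exact h0 (by ext i j; simp [hc])
  have e01 : ∀ (x : Fin 2 → ℝ), x 0 ≠ 0 → x ≠ 0 := fun x hx h => hx (by simp [h])
  have e11 : ∀ (x : Fin 2 → ℝ), x 1 ≠ 0 → x ≠ 0 := fun x hx h => hx (by simp [h])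
  by_cases ha : R 0 0 ≠ 0
  · refine ⟨![R 0 0, R 1 0], ![1, R 0 1 / R 0 0], e01 _ (by simpa using ha),
      e01 _ (by norm_num), ?_⟩
    ext i j; fin_cases i <;> fin_cases j <;> simp [vecMulVec_apply] <;> field_simp <;> linarith
  by_cases hb : R 0 1 ≠ 0
  · refine ⟨![R 0 1, R 1 1], ![R 0 0 / R 0 1, 1], e01 _ (by simpa using hb),
      e11 _ (by norm_num), ?_⟩
    ext i j; fin_cases i <;> fin_cases j <;> simp [vecMulVec_apply] <;> field_simp <;> linarith
  by_cases hc : R 1 0 ≠ 0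
  · refine ⟨![R 0 0, R 1 0], ![1, R 1 1 / R 1 0], e11 _ (by simpa using hc),
      e01 _ (by norm_num), ?_⟩
    ext i j; fin_cases i <;> fin_cases j <;> simp [vecMulVec_apply] <;> field_simp <;> linarith
  push_neg at ha hb hc
  have hd2 : R 1 1 ≠ 0 := by
    rcases hR with ⟨i, j, hij⟩
    fin_cases i <;> fin_cases j <;> simp_all
  refine ⟨![R 0 1, R 1 1], ![R 1 0 / R 1 1, 1], e11 _ (by simpa using hd2),
    e11 _ (by norm_num), ?_⟩
  ext i j; fin_cases i <;> fin_cases j <;> simp [vecMulVec_apply, ha, hb, hc] <;> field_simp <;> linarith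

variable {G : Type} [Group G]


lemma span_mul_mem (ρ : G →* M2) {x y : M2}
    (hx : x ∈ Submodule.span ℝ (Set.range ⇑ρ)) (hy : y ∈ Submodule.span ℝ (Set.range ⇑ρ)) :
    x * y ∈ Submodule.span ℝ (Set.range ⇑ρ) := by
  induction hx using Submodule.span_induction with
  | mem a ha =>
    induction hy using Submodule.span_induction with
    | mem b hb =>
      rcases ha with ⟨g, rfl⟩; rcases hb with ⟨h, rfl⟩
      exact Submodule.subset_span ⟨g * h, by rw [_root_.map_mul]⟩
    | zero => rw [mul_zero]; exact Submodule.zero_mem _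
    | add b c hb hc ihb ihc => rw [mul_add]; exact Submodule.add_mem _ ihb ihc
    | smul r b hb ihb => rw [mul_smul_comm]; exact Submodule.smul_mem _ _ ihb
  | zero => rw [zero_mul]; exact Submodule.zero_mem _
  | add a b ha hb iha ihb => rw [add_mul]; exact Submodule.add_mem _ iha ihb
  | smul r a ha iha => rw [smul_mul_assoc]; exact Submodule.smul_mem _ _ iha

lemma no_left_eig (ρ : G →* M2)
    (hirr : ¬ ∃ v : Fin 2 → ℝ, v ≠ 0 ∧ ∀ g, ∃ c : ℝ, (ρ g).mulVec v = c • v)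
    {t : Fin 2 → ℝ} (ht : t ≠ 0) :
    ∃ g, ∀ c : ℝ, Matrix.vecMul t (ρ g) ≠ c • t := by
  by_contra hc
  push_neg at hc
  apply hirr
  have hv : (![t 1, -t 0] : Fin 2 → ℝ) ≠ 0 := by
    intro h
    have h0 := congrFun h 0
    have h1 := congrFun h 1
    simp at h0 h1
    rcases vne ht with h' | h' <;> simp_all
  refine ⟨![t 1, -t 0], hv, fun g => ?_⟩
  obtain ⟨c, hcg⟩ := hc g
  have hc0 := congrFun hcg 0
  have hc1 := congrFun hcg 1
  rw [vecMul2] at hc0 hc1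
  simp at hc0 hc1
  apply perp_of_dot ht
  rw [mulVec2, mulVec2]
  simp
  linear_combination t 1 * hc0 - t 0 * hc1

lemma rankone_span_top (ρ : G →* M2)
    (hirr : ¬ ∃ v : Fin 2 → ℝ, v ≠ 0 ∧ ∀ g, ∃ c : ℝ, (ρ g).mulVec v = c • v)
    {R : M2} (hR : R ∈ Submodule.span ℝ (Set.range ⇑ρ)) (h0 : R ≠ 0) (hd : R.det = 0) :
    Submodule.span ℝ (Set.range ⇑ρ) = ⊤ := by
  set W := Submodule.span ℝ (Set.range ⇑ρ) with hW
  obtain ⟨u, t, hu, ht, rfl⟩ := rank_one_decomp h0 hd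
  have hmemρ : ∀ g, ρ g ∈ W := fun g => Submodule.subset_span ⟨g, rfl⟩
  -- find g₀ with (ρ g₀) *ᵥ u not a multiple of u
  have hg0 : ∃ g, ∀ c : ℝ, (ρ g).mulVec u ≠ c • u := by
    by_contra hcon
    push_neg at hcon
    exact hirr ⟨u, hu, hcon⟩
  obtain ⟨g₀, hg₀⟩ := hg0
  obtain ⟨h₀, hh₀⟩ := no_left_eig ρ hirr ht
  set u' := (ρ g₀).mulVec u with hu'
  set t' := Matrix.vecMul t (ρ h₀) with ht'
  have du : u 0 * u' 1 - u 1 * u' 0 ≠ 0 := by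
    intro hz
    obtain ⟨c, hc⟩ := colinear_of_det2 hz hu
    exact hg₀ c hc
  have dt : t 0 * t' 1 - t 1 * t' 0 ≠ 0 := by
    intro hz
    obtain ⟨c, hc⟩ := colinear_of_det2 hz ht
    exact hh₀ c hc
  have base : ∀ x ∈ ({u, u'} : Set (Fin 2 → ℝ)), ∀ y ∈ ({t, t'} : Set (Fin 2 → ℝ)),
      vecMulVec x y ∈ W := by
    rintro x (rfl | rfl) y (rfl | rfl)
    · exact hR
    · rw [ht', ← vecMulVec_mul]; exact span_mul_mem ρ hR (hmemρ h₀)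
    · rw [hu', ← mul_vecMulVec]; exact span_mul_mem ρ (hmemρ g₀) hR
    · rw [hu', ht', ← mul_vecMulVec, ← vecMulVec_mul]
      exact span_mul_mem ρ (hmemρ g₀) (span_mul_mem ρ hR (hmemρ h₀))
  have key : ∀ x y : Fin 2 → ℝ, vecMulVec x y ∈ W := by
    intro x y
    obtain ⟨a, b, rfl⟩ := cramer2 du x
    obtain ⟨c, d, rfl⟩ := cramer2 dt y
    rw [vecMulVec_bilin]
    have m1 := base u (by simp) t (by simp)
    have m2 := base u (by simp) t' (by simp)
    have m3 := base u' (by simp) t (by simp)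
    have m4 := base u' (by simp) t' (by simp)
    exact Submodule.add_mem _ (Submodule.add_mem _ (Submodule.add_mem _
      (Submodule.smul_mem _ _ m1) (Submodule.smul_mem _ _ m2))
      (Submodule.smul_mem _ _ m3)) (Submodule.smul_mem _ _ m4)
  rw [Submodule.eq_top_iff']
  intro M
  have hMeq : M = M 0 0 • vecMulVec ![1,0] ![1,0] + M 0 1 • vecMulVec ![1,0] ![0,1]
      + M 1 0 • vecMulVec ![0,1] ![1,0] + M 1 1 • vecMulVec ![0,1] ![0,1] := by
    ext i j
    fin_cases i <;> fin_cases j <;> simp [vecMulVec_apply]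
  rw [hMeq]
  exact Submodule.add_mem _ (Submodule.add_mem _ (Submodule.add_mem _
    (Submodule.smul_mem _ _ (key _ _)) (Submodule.smul_mem _ _ (key _ _)))
    (Submodule.smul_mem _ _ (key _ _))) (Submodule.smul_mem _ _ (key _ _))


lemma commute_nonscalar {J M : M2} (h10 : J 1 0 ≠ 0) (hcomm : M * J = J * M) :
    ∃ a b : ℝ, M = a • 1 + b • J := by
  refine ⟨M 0 0 - (M 1 0 / J 1 0) * J 0 0, M 1 0 / J 1 0, ?_⟩
  have e10 := congrFun (congrFun hcomm 1) 0
  have e11 := congrFun (congrFun hcomm 1) 1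
  rw [mulapp, mulapp] at e10 e11
  ext i j
  fin_cases i <;> fin_cases j <;> simp [Matrix.one_apply] <;> field_simp
  all_goals first
    | linear_combination -e11
    | linear_combination e10
    | linear_combination J 1 0 * e10
    | linear_combination -(J 1 0 * e11)
    | linear_combination e11
    | linear_combination -e10

lemma smul_mul_smul_matrix (a b : ℝ) (A B : M2) : (a • A) * (b • B) = (a*b) • (A*B) := by
  rw [smul_mul_assoc, mul_smul_comm, smul_smul]

lemma expand_comb (a b c d : ℝ) (J : M2) :
    (a • (1:M2) + b • J) * (c • 1 + d • J)
      = (a*c) • 1 + (a*d + b*c) • J + (b*d) • (J*J) := by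
  simp only [mul_add, add_mul, smul_mul_smul_matrix, mul_one, one_mul]
  module


lemma quat_false {J K : M2} (hJ : J * J = -1) (hK : K * K = -1)
    (hanti : J * K + K * J = 0) : False := by
  set x : ℝ := -(K 0 1) with hx
  set y : ℝ := J 0 1 with hy
  set M : M2 := x • J + y • K with hM
  have hMM : M * M = -((x^2 + y^2) • (1 : M2)) := by
    rw [hM]
    have e : (x • J + y • K) * (x • J + y • K)
        = (x*x) • (J*J) + (x*y) • (J*K + K*J) + (y*y) • (K*K) := by
      simp only [mul_add, add_mul, smul_mul_smul_matrix, smul_add]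
      module
    rw [e, hJ, hK, hanti, smul_zero]
    module
  have hc : x^2 + y^2 = 0 ∨ 0 < x^2 + y^2 := by
    rcases lt_or_eq_of_le (by positivity : (0:ℝ) ≤ x^2 + y^2) with h | h
    · exact Or.inr h
    · exact Or.inl h.symm
  rcases hc with h0 | hpos
  · have hx0 : x = 0 := by nlinarith [sq_nonneg x, sq_nonneg y]
    have hy0 : y = 0 := by nlinarith [sq_nonneg x, sq_nonneg y]
    exact (sq_neg_one_offdiag hJ).2 (by rw [← hy]; exact hy0)
  · set c := x^2 + y^2 with hc
    set N : M2 := (Real.sqrt c)⁻¹ • M with hN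
    have hNN : N * N = -1 := by
      rw [hN, smul_mul_smul_matrix, hMM]
      rw [smul_neg, smul_smul]
      have hone : (Real.sqrt c)⁻¹ * (Real.sqrt c)⁻¹ * c = 1 := by
        have h2 : Real.sqrt c * Real.sqrt c = c := Real.mul_self_sqrt hpos.le
        have hs : Real.sqrt c ≠ 0 := ne_of_gt (Real.sqrt_pos.2 hpos)
        field_simp
        try linarith [h2]
      rw [hone, one_smul]
    have h01 : N 0 1 = 0 := by
      rw [hN, hM]
      simp only [Matrix.smul_apply, Matrix.add_apply, smul_eq_mul]
      rw [hx, hy]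
      ring
    exact (sq_neg_one_offdiag hNN).2 h01

lemma traceless_rankone {C : M2} (htr : Matrix.trace C = 0) (hC : C ≠ 0)
    (hdet : C.det ≤ 0) :
    (C + Real.sqrt (-C.det) • 1) ≠ 0 ∧ (C + Real.sqrt (-C.det) • 1).det = 0 := by
  set μ := Real.sqrt (-C.det) with hμ
  have hμ2 : μ^2 = -C.det := Real.sq_sqrt (by linarith)
  rw [trace2] at htr
  rw [det2] at hμ2 ⊢
  constructor
  · intro h
    have h00 := congrFun (congrFun h 0) 0
    have h11 := congrFun (congrFun h 1) 1
    have h01 := congrFun (congrFun h 0) 1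
    have h10 := congrFun (congrFun h 1) 0
    simp [Matrix.one_apply] at h00 h11 h01 h10
    have hμ0 : μ = 0 := by linarith
    apply hC
    ext i j
    fin_cases i <;> fin_cases j <;> simp <;> linarith [hμ0, h00, h11, h01, h10]
  · simp [Matrix.add_apply, Matrix.smul_apply, Matrix.one_apply]
    linear_combination hμ2 + μ * htr

lemma traceless_J {C : M2} (htr : Matrix.trace C = 0) (hdet : 0 < C.det) :
    ((Real.sqrt C.det)⁻¹ • C) * ((Real.sqrt C.det)⁻¹ • C) = -1 := by
  rw [smul_mul_smul_matrix, cayley C, htr, zero_smul, zero_sub, smul_neg, smul_smul]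
  have : (Real.sqrt C.det)⁻¹ * (Real.sqrt C.det)⁻¹ * C.det = 1 := by
    have h2 : Real.sqrt C.det * Real.sqrt C.det = C.det := Real.mul_self_sqrt hdet.le
    have hs : Real.sqrt C.det ≠ 0 := ne_of_gt (Real.sqrt_pos.2 hdet)
    field_simp
    try linarith [h2]
  rw [this, one_smul]

variable {G : Type} [Group G] in
lemma comm_or_top (ρ : G →* M2)
    (hirr : ¬ ∃ v : Fin 2 → ℝ, v ≠ 0 ∧ ∀ g, ∃ c : ℝ, (ρ g).mulVec v = c • v) :
    (∀ g h, ρ g * ρ h = ρ h * ρ g) ∨ Submodule.span ℝ (Set.range ⇑ρ) = ⊤ := by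
  by_cases hcomm : ∀ g h, ρ g * ρ h = ρ h * ρ g
  · exact Or.inl hcomm
  right
  push_neg at hcomm
  obtain ⟨g, h, hne⟩ := hcomm
  set W := Submodule.span ℝ (Set.range ⇑ρ) with hW
  have hmemρ : ∀ k, ρ k ∈ W := fun k => Submodule.subset_span ⟨k, rfl⟩
  have hone : (1 : M2) ∈ W := by
    have := hmemρ 1
    rwa [_root_.map_one] at this
  set C := ρ g * ρ h - ρ h * ρ g with hC
  have hCW : C ∈ W := Submodule.sub_mem _
    (span_mul_mem ρ (hmemρ g) (hmemρ h)) (span_mul_mem ρ (hmemρ h) (hmemρ g))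
  have hCne : C ≠ 0 := sub_ne_zero.2 hne
  have hCtr : Matrix.trace C = 0 := by
    rw [hC, Matrix.trace_sub, Matrix.trace_mul_comm]
    ring
  -- helper to conclude from a traceless nonzero element of W with nonpositive det
  have finish : ∀ D : M2, D ∈ W → D ≠ 0 → Matrix.trace D = 0 → D.det ≤ 0 → W = ⊤ := by
    intro D hDW hDne hDtr hDdet
    obtain ⟨hRne, hRdet⟩ := traceless_rankone hDtr hDne hDdet
    exact rankone_span_top ρ hirr
      (Submodule.add_mem _ hDW (Submodule.smul_mem _ _ hone)) hRne hRdet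
  by_cases hdc : C.det ≤ 0
  · exact finish C hCW hCne hCtr hdc
  push_neg at hdc
  set J := (Real.sqrt C.det)⁻¹ • C with hJ
  have hJW : J ∈ W := Submodule.smul_mem _ _ hCW
  have hJ2 : J * J = -1 := traceless_J hCtr hdc
  have h10 : J 1 0 ≠ 0 := (sq_neg_one_offdiag hJ2).1
  by_cases hDJ : ρ g * J = J * ρ g ∧ ρ h * J = J * ρ h
  · obtain ⟨a, b, hab⟩ := commute_nonscalar h10 hDJ.1
    obtain ⟨c, d, hcd⟩ := commute_nonscalar h10 hDJ.2
    apply absurd _ hne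
    rw [hab, hcd, expand_comb, expand_comb]
    ring_nf
  · have hD : ∃ D : M2, D ∈ W ∧ D * J ≠ J * D := by
      by_cases h1 : ρ g * J = J * ρ g
      · refine ⟨ρ h, hmemρ h, ?_⟩
        intro hcon
        exact hDJ ⟨h1, hcon⟩
      · exact ⟨ρ g, hmemρ g, h1⟩
    obtain ⟨D, hDW, hDJne⟩ := hD
    set K := D * J - J * D with hK
    have hKW : K ∈ W := Submodule.sub_mem _ (span_mul_mem ρ hDW hJW) (span_mul_mem ρ hJW hDW)
    have hKne : K ≠ 0 := sub_ne_zero.2 hDJne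
    have hKtr : Matrix.trace K = 0 := by
      rw [hK, Matrix.trace_sub, Matrix.trace_mul_comm]
      ring
    have hanti : J * K + K * J = 0 := by
      rw [hK]
      have : J * (D * J - J * D) + (D * J - J * D) * J
          = D * (J * J) - (J * J) * D := by noncomm_ring
      rw [this, hJ2]
      noncomm_ring
    by_cases hdk : K.det ≤ 0
    · exact finish K hKW hKne hKtr hdk
    push_neg at hdk
    exfalso
    set K' := (Real.sqrt K.det)⁻¹ • K with hK'
    have hK'2 : K' * K' = -1 := traceless_J hKtr hdk
    have hanti' : J * K' + K' * J = 0 := by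
      have h2 := congrArg (fun X : M2 => (Real.sqrt K.det)⁻¹ • X) hanti
      have h3 : J * ((Real.sqrt K.det)⁻¹ • K) + ((Real.sqrt K.det)⁻¹ • K) * J = 0 := by
        simpa [smul_add, mul_smul_comm, smul_mul_assoc] using h2
      rw [hK']
      exact h3
    exact quat_false hJ2 hK'2 hanti'

lemma vecMulVec_mulVec (u t w : Fin 2 → ℝ) :
    (vecMulVec u t).mulVec w = (t 0 * w 0 + t 1 * w 1) • u := by
  funext i
  rw [mulVec2]
  simp [vecMulVec_apply]
  ring

variable {G : Type} [Group G]

lemma comm_nonscalar_exists (ρ : G →* M2)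
    (hirr : ¬ ∃ v : Fin 2 → ℝ, v ≠ 0 ∧ ∀ g, ∃ c : ℝ, (ρ g).mulVec v = c • v) :
    ∃ g₀, ∀ c : ℝ, ρ g₀ ≠ c • 1 := by
  by_contra hcon
  push_neg at hcon
  apply hirr
  refine ⟨![1, 0], by simp, fun g => ?_⟩
  obtain ⟨c, hc⟩ := hcon g
  refine ⟨c, ?_⟩
  rw [hc]
  funext i
  rw [mulVec2]
  fin_cases i <;> simp [Matrix.one_apply]

lemma comm_trace_sq_lt (ρ : G →* M2) (hdet : ∀ g, (ρ g).det = 1)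
    (hirr : ¬ ∃ v : Fin 2 → ℝ, v ≠ 0 ∧ ∀ g, ∃ c : ℝ, (ρ g).mulVec v = c • v)
    (hcomm : ∀ g h, ρ g * ρ h = ρ h * ρ g)
    {g₀ : G} (hns : ∀ c : ℝ, ρ g₀ ≠ c • 1) :
    (Matrix.trace (ρ g₀))^2 < 4 := by
  by_contra hcon
  push_neg at hcon
  set τ := Matrix.trace (ρ g₀) with hτ
  set l := (τ + Real.sqrt (τ^2 - 4))/2 with hl
  have hs2 : (Real.sqrt (τ^2 - 4))^2 = τ^2 - 4 := Real.sq_sqrt (by linarith)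
  set E := ρ g₀ - l • 1 with hE
  have hdet0 : E.det = 0 := by
    have hdet1 := hdet g₀
    rw [det2] at hdet1 ⊢
    rw [trace2] at hτ
    have e : ∀ i j, E i j = (ρ g₀) i j - l * (1 : M2) i j := by
      intro i j; rw [hE]; simp
    rw [e, e, e, e]
    simp [Matrix.one_apply]
    have hll : l^2 - τ * l + 1 = 0 := by
      rw [hl]
      linear_combination (1/4) * hs2
    linear_combination hdet1 + hll + l * hτ
  have hEne : E ≠ 0 := by
    intro h
    apply hns l
    rw [hE] at h
    rw [← sub_eq_zero]
    exact h
  obtain ⟨u, t, hu, ht, hEut⟩ := rank_one_decomp hEne hdet0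
  apply hirr
  have hv : (![t 1, -t 0] : Fin 2 → ℝ) ≠ 0 := by
    intro h
    have h0 := congrFun h 0
    have h1 := congrFun h 1
    simp at h0 h1
    rcases vne ht with h' | h' <;> simp_all
  refine ⟨![t 1, -t 0], hv, fun g => ?_⟩
  have hcomE : ρ g * E = E * ρ g := by
    rw [hE, mul_sub, sub_mul, hcomm g g₀, mul_smul_comm, smul_mul_assoc, mul_one, one_mul]
  have hEv : E.mulVec ![t 1, -t 0] = 0 := by
    rw [hEut, vecMulVec_mulVec]
    have : t 0 * (![t 1, -t 0] : Fin 2 → ℝ) 0 + t 1 * (![t 1, -t 0] : Fin 2 → ℝ) 1 = 0 := by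
      simp; ring
    rw [this, zero_smul]
  have hEgv : E.mulVec ((ρ g).mulVec ![t 1, -t 0]) = 0 := by
    rw [Matrix.mulVec_mulVec, ← hcomE, ← Matrix.mulVec_mulVec, hEv, Matrix.mulVec_zero]
  rw [hEut, vecMulVec_mulVec] at hEgv
  have hdot : t 0 * ((ρ g).mulVec ![t 1, -t 0]) 0 + t 1 * ((ρ g).mulVec ![t 1, -t 0]) 1 = 0 := by
    rcases smul_eq_zero.1 hEgv with h | h
    · exact h
    · exact absurd h hu
  exact perp_of_dot ht hdot

lemma sqrt_det_eq {τ : ℝ} (hτ : τ^2 < 4) :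
    Real.sqrt ((4 - τ^2)/4) = Real.sqrt (4 - τ^2) / 2 := by
  rw [show ((4:ℝ) - τ^2)/4 = (Real.sqrt (4 - τ^2)/2)^2 from by
    rw [div_pow, Real.sq_sqrt (by nlinarith)]; norm_num]
  exact Real.sqrt_sq (by positivity)

lemma comm_J_sq {X : M2} (hdetX : X.det = 1) (hτ : (Matrix.trace X)^2 < 4) :
    ((Real.sqrt (4 - (Matrix.trace X)^2)/2)⁻¹ • (X - ((Matrix.trace X)/2) • 1)) *
    ((Real.sqrt (4 - (Matrix.trace X)^2)/2)⁻¹ • (X - ((Matrix.trace X)/2) • 1)) = -1 := by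
  set τ := Matrix.trace X with hτdef
  set C := X - (τ/2) • 1 with hC
  have hCtr : Matrix.trace C = 0 := by
    rw [hC, Matrix.trace_sub, Matrix.trace_smul, Matrix.trace_one]
    simp
    linarith [hτdef]
  have hCdet : C.det = (4 - τ^2)/4 := by
    rw [det2] at hdetX ⊢
    rw [trace2] at hτdef
    have e : ∀ i j, C i j = X i j - (τ/2) * (1 : M2) i j := by
      intro i j; rw [hC]; simp
    rw [e, e, e, e]
    simp [Matrix.one_apply]
    linear_combination hdetX + (τ/2) * hτdef
  have hpos : 0 < C.det := by rw [hCdet]; nlinarith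
  have := traceless_J hCtr hpos
  rwa [hCdet, sqrt_det_eq hτ] at this

lemma comm_coeffs {X A J : M2} {tv sv : ℝ} (htv : tv = Matrix.trace X) (hsv : sv ≠ 0)
    (hJdef : J = sv⁻¹ • (X - (tv/2) • 1)) (hJ2 : J * J = -1)
    (hAX : A * X = X * A) :
    A = ((Matrix.trace A)/2) • 1 +
      (-(Matrix.trace (A * X) - (tv/2) * Matrix.trace A) / (2 * sv)) • J := by
  have h10 : J 1 0 ≠ 0 := (sq_neg_one_offdiag hJ2).1
  have hJtr : Matrix.trace J = 0 := sq_neg_one_trace hJ2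
  have hAJ : A * J = J * A := by
    rw [hJdef, mul_smul_comm, smul_mul_assoc, mul_sub, sub_mul, hAX,
      mul_smul_comm, smul_mul_assoc, mul_one, one_mul]
  have htrAX : Matrix.trace (A * J) = sv⁻¹ * (Matrix.trace (A * X) - (tv/2) * Matrix.trace A) := by
    rw [hJdef, mul_smul_comm, Matrix.trace_smul, mul_sub, Matrix.trace_sub, mul_smul_comm,
      Matrix.trace_smul, mul_one]
    simp
  obtain ⟨a, b, hab⟩ := commute_nonscalar h10 hAJ
  have htrA : Matrix.trace A = 2 * a := by
    rw [hab, Matrix.trace_add, Matrix.trace_smul, Matrix.trace_smul, hJtr, Matrix.trace_one]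
    simp; ring
  have htrAJ : Matrix.trace (A * J) = -2 * b := by
    rw [hab, add_mul, smul_mul_assoc, smul_mul_assoc, one_mul, hJ2,
      Matrix.trace_add, Matrix.trace_smul, Matrix.trace_smul, hJtr]
    simp
    ring
  have e1 : a = Matrix.trace A / 2 := by linarith
  have e2 : b = -(Matrix.trace (A * X) - (tv/2) * Matrix.trace A) / (2 * sv) := by
    have h := htrAJ.symm.trans htrAX
    field_simp at h ⊢
    linarith
  rw [e1, e2] at hab
  exact hab

lemma conj_of_sq_neg_one {J J' : M2} (hJ : J * J = -1) (hJ' : J' * J' = -1) :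
    ∃ P : M2, P.det ≠ 0 ∧ P * J = J' * P := by
  have h10 : J 1 0 ≠ 0 := (sq_neg_one_offdiag hJ).1
  have h10' : J' 1 0 ≠ 0 := (sq_neg_one_offdiag hJ').1
  set J₀ : M2 := !![0, -1; 1, 0] with hJ₀
  set Q : M2 := !![1, J 0 0; 0, J 1 0] with hQ
  set Q' : M2 := !![1, J' 0 0; 0, J' 1 0] with hQ'
  have hdQ : Q.det = J 1 0 := by rw [hQ, Matrix.det_fin_two_of]; ring
  have hdQ' : Q'.det = J' 1 0 := by rw [hQ', Matrix.det_fin_two_of]; ring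
  have hQu : IsUnit Q.det := by rw [hdQ]; exact (isUnit_iff_ne_zero).2 h10
  have hQu' : IsUnit Q'.det := by rw [hdQ']; exact (isUnit_iff_ne_zero).2 h10'
  have key : ∀ K : M2, K * K = -1 → K * !![1, K 0 0; 0, K 1 0] = !![1, K 0 0; 0, K 1 0] * J₀ := by
    intro K hK
    have e00 := congrFun (congrFun hK 0) 0
    have e10 := congrFun (congrFun hK 1) 0
    rw [mulapp] at e00 e10
    simp at e00 e10
    ext i j
    fin_cases i <;> fin_cases j <;> simp [mulapp, hJ₀] <;> linarith
  have hQJ : J * Q = Q * J₀ := key J hJ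
  have hQJ' : J' * Q' = Q' * J₀ := key J' hJ'
  have hJeq : J = Q * J₀ * Q⁻¹ := by
    have h1 : J * Q * Q⁻¹ = Q * J₀ * Q⁻¹ := by rw [hQJ]
    rwa [mul_assoc, Matrix.mul_nonsing_inv _ hQu, mul_one] at h1
  have hJeq' : J' = Q' * J₀ * Q'⁻¹ := by
    have h1 : J' * Q' * Q'⁻¹ = Q' * J₀ * Q'⁻¹ := by rw [hQJ']
    rwa [mul_assoc, Matrix.mul_nonsing_inv _ hQu', mul_one] at h1
  refine ⟨Q' * Q⁻¹, ?_, ?_⟩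
  · rw [Matrix.det_mul, Matrix.det_nonsing_inv]
    simp [hdQ, hdQ', Ring.inverse_eq_inv']
    exact ⟨h10', h10⟩
  · rw [hJeq, hJeq']
    simp only [mul_assoc]
    rw [Matrix.nonsing_inv_mul_cancel_left _ _ hQu, Matrix.nonsing_inv_mul_cancel_left _ _ hQu']

variable {G : Type} [Group G] in
lemma scale_conj {P₀ : M2} (hd : P₀.det ≠ 0) (ρ₁ ρ₂ : G →* M2)
    (hconj : ∀ g, P₀ * ρ₁ g = ρ₂ g * P₀) :
    ∃ P : M2, (P.det = 1 ∨ P.det = -1) ∧ ∀ g, P * ρ₁ g * P⁻¹ = ρ₂ g := by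
  set c : ℝ := Real.sqrt |P₀.det| with hc
  have hcpos : 0 < c := Real.sqrt_pos.2 (abs_pos.2 hd)
  have hc2 : c^2 = |P₀.det| := Real.sq_sqrt (abs_nonneg _)
  set P : M2 := c⁻¹ • P₀ with hP
  have hdP : P.det = (c⁻¹)^2 * P₀.det := by
    rw [hP, Matrix.det_smul]
    norm_num [Fintype.card_fin]
  have hdet1 : P.det = 1 ∨ P.det = -1 := by
    rcases abs_cases P₀.det with ⟨habs, _⟩ | ⟨habs, _⟩
    · left
      rw [hdP]
      field_simp
      rw [hc2, habs]
    · right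
      rw [hdP]
      have : c^2 ≠ 0 := by positivity
      field_simp
      rw [hc2, habs]
      ring
  have hdPne : P.det ≠ 0 := by
    rcases hdet1 with h | h <;> rw [h] <;> norm_num
  refine ⟨P, hdet1, fun g => ?_⟩
  have hPg : P * ρ₁ g = ρ₂ g * P := by
    rw [hP, smul_mul_assoc, mul_smul_comm, hconj g]
  rw [hPg, mul_assoc, Matrix.mul_nonsing_inv _ ((isUnit_iff_ne_zero).2 hdPne), mul_one]

variable {G : Type} [Group G] in
lemma comm_comm_case (ρ₁ ρ₂ : G →* M2)
    (hdet₁ : ∀ g, (ρ₁ g).det = 1) (hdet₂ : ∀ g, (ρ₂ g).det = 1)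
    (hirr₁ : ¬ ∃ v : Fin 2 → ℝ, v ≠ 0 ∧ ∀ g, ∃ c : ℝ, (ρ₁ g).mulVec v = c • v)
    (hchar : ∀ g, Matrix.trace (ρ₁ g) = Matrix.trace (ρ₂ g))
    (hc₁ : ∀ g h, ρ₁ g * ρ₁ h = ρ₁ h * ρ₁ g) (hc₂ : ∀ g h, ρ₂ g * ρ₂ h = ρ₂ h * ρ₂ g) :
    ∃ P : M2, (P.det = 1 ∨ P.det = -1) ∧ ∀ g, P * ρ₁ g * P⁻¹ = ρ₂ g := by
  obtain ⟨g₀, hns⟩ := comm_nonscalar_exists ρ₁ hirr₁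
  have hτ1 : (Matrix.trace (ρ₁ g₀))^2 < 4 := comm_trace_sq_lt ρ₁ hdet₁ hirr₁ hc₁ hns
  have hτ2 : (Matrix.trace (ρ₂ g₀))^2 < 4 := by rw [← hchar g₀]; exact hτ1
  have hraw1 := comm_J_sq (hdet₁ g₀) hτ1
  have hraw2 := comm_J_sq (hdet₂ g₀) hτ2
  rw [← hchar g₀] at hraw2
  set T := Matrix.trace (ρ₁ g₀) with hTdef
  set S := Real.sqrt (4 - T^2)/2 with hSdef
  have hSpos : 0 < S := by
    have h4 : (0:ℝ) < 4 - T^2 := by linarith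
    have := Real.sqrt_pos.2 h4
    rw [hSdef]
    linarith
  set J₁ := S⁻¹ • (ρ₁ g₀ - (T/2) • 1) with hJ1def
  set J₂ := S⁻¹ • (ρ₂ g₀ - (T/2) • 1) with hJ2def
  have hJ1 : J₁ * J₁ = -1 := hraw1
  have hJ2 : J₂ * J₂ = -1 := hraw2
  obtain ⟨P₀, hdP₀, hPJ⟩ := conj_of_sq_neg_one hJ1 hJ2
  apply scale_conj hdP₀ ρ₁ ρ₂
  intro g
  have d1 := comm_coeffs (X := ρ₁ g₀) (A := ρ₁ g) (J := J₁) hTdef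
    (ne_of_gt hSpos) hJ1def hJ1 (hc₁ g g₀)
  have d2 := comm_coeffs (X := ρ₂ g₀) (A := ρ₂ g) (J := J₂) (hTdef.trans (hchar g₀))
    (ne_of_gt hSpos) hJ2def hJ2 (hc₂ g g₀)
  have e1 : Matrix.trace (ρ₂ g) = Matrix.trace (ρ₁ g) := (hchar g).symm
  have e2 : Matrix.trace (ρ₂ g * ρ₂ g₀) = Matrix.trace (ρ₁ g * ρ₁ g₀) := by
    rw [← _root_.map_mul, ← _root_.map_mul]
    exact (hchar (g*g₀)).symm
  rw [e1, e2] at d2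
  rw [d1, d2]
  rw [mul_add, add_mul, mul_smul_comm, mul_smul_comm, smul_mul_assoc, smul_mul_assoc,
    mul_one, one_mul, hPJ]

lemma trace_nondeg {Z : M2} (h : ∀ Y : M2, Matrix.trace (Z * Y) = 0) : Z = 0 := by
  have h1 := h !![(1:ℝ),0;0,0]
  have h2 := h !![(0:ℝ),1;0,0]
  have h3 := h !![(0:ℝ),0;1,0]
  have h4 := h !![(0:ℝ),0;0,1]
  rw [trace2, mulapp, mulapp] at h1 h2 h3 h4
  simp at h1 h2 h3 h4
  ext i j
  fin_cases i <;> fin_cases j <;> simp_all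

variable {G : Type} [Group G]

lemma trace_zero_on_span (ρ : G →* M2) {Z : M2} (hz : ∀ g, Matrix.trace (Z * ρ g) = 0)
    {Y : M2} (hY : Y ∈ Submodule.span ℝ (Set.range ⇑ρ)) : Matrix.trace (Z * Y) = 0 := by
  induction hY using Submodule.span_induction with
  | mem a ha => obtain ⟨g, rfl⟩ := ha; exact hz g
  | zero => simp
  | add a b _ _ iha ihb => rw [mul_add, Matrix.trace_add, iha, ihb]; ring
  | smul r a _ iha => rw [mul_smul_comm, Matrix.trace_smul, iha]; simp

lemma phi_exists (ρ₁ ρ₂ : G →* M2)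
    (hchar : ∀ g, Matrix.trace (ρ₁ g) = Matrix.trace (ρ₂ g))
    (hspan₁ : Submodule.span ℝ (Set.range ⇑ρ₁) = ⊤) :
    ∃ φ : M2 →ₗ[ℝ] M2,
      (∀ x h, Matrix.trace (φ x * ρ₂ h) = Matrix.trace (x * ρ₁ h)) ∧
      (∀ x, φ x ∈ Submodule.span ℝ (Set.range ⇑ρ₂)) := by
  obtain ⟨bs, hbsub, hbspan, hbli⟩ := exists_linearIndependent ℝ (Set.range ⇑ρ₁)
  rw [hspan₁] at hbspan
  let b : Module.Basis bs ℝ M2 := Module.Basis.mk hbli (by rw [Subtype.range_coe, hbspan])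
  have hb : ∀ i : bs, b i = (i : M2) := fun i => Module.Basis.mk_apply hbli _ i
  have hγ : ∀ i : bs, ∃ g : G, ρ₁ g = (i : M2) := fun i => hbsub i.2
  choose γ hγspec using hγ
  set φ := b.constr ℝ (fun i => ρ₂ (γ i)) with hφ
  have hφb : ∀ i : bs, φ (b i) = ρ₂ (γ i) := fun i => b.constr_basis ℝ _ i
  refine ⟨φ, fun x h => ?_, fun x => ?_⟩
  · set L1 : M2 →ₗ[ℝ] ℝ :=
      (Matrix.traceLinearMap (Fin 2) ℝ ℝ).comp ((LinearMap.mulRight ℝ (ρ₂ h)).comp φ) with hL1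
    set L2 : M2 →ₗ[ℝ] ℝ :=
      (Matrix.traceLinearMap (Fin 2) ℝ ℝ).comp (LinearMap.mulRight ℝ (ρ₁ h)) with hL2
    have : L1 = L2 := by
      apply b.ext
      intro i
      rw [hL1, hL2]
      simp only [LinearMap.comp_apply, LinearMap.mulRight_apply, Matrix.traceLinearMap_apply]
      rw [hφb i, hb i, ← hγspec i, ← _root_.map_mul, ← _root_.map_mul, hchar]
    have := congrArg (fun L : M2 →ₗ[ℝ] ℝ => L x) this
    simpa [hL1, hL2] using this
  · rw [hφ, Module.Basis.constr_apply]
    apply Submodule.sum_mem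
    intro i _
    exact Submodule.smul_mem _ _ (Submodule.subset_span ⟨γ i, rfl⟩)

lemma phi_eq (ρ₁ ρ₂ : G →* M2)
    (hchar : ∀ g, Matrix.trace (ρ₁ g) = Matrix.trace (ρ₂ g))
    (hspan₁ : Submodule.span ℝ (Set.range ⇑ρ₁) = ⊤)
    (hnd₂ : ∀ Z ∈ Submodule.span ℝ (Set.range ⇑ρ₂),
      (∀ h, Matrix.trace (Z * ρ₂ h) = 0) → Z = 0) :
    ∃ φ : M2 →ₗ[ℝ] M2, (∀ g, φ (ρ₁ g) = ρ₂ g) ∧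
      (∀ x h, Matrix.trace (φ x * ρ₂ h) = Matrix.trace (x * ρ₁ h)) ∧
      (∀ x, φ x ∈ Submodule.span ℝ (Set.range ⇑ρ₂)) ∧
      (∀ x, φ x = 0 → x = 0) := by
  obtain ⟨φ, htr, hmem⟩ := phi_exists ρ₁ ρ₂ hchar hspan₁
  have hmain : ∀ g, φ (ρ₁ g) = ρ₂ g := by
    intro g
    have hZ : φ (ρ₁ g) - ρ₂ g ∈ Submodule.span ℝ (Set.range ⇑ρ₂) :=
      Submodule.sub_mem _ (hmem _) (Submodule.subset_span ⟨g, rfl⟩)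
    have hz : ∀ h, Matrix.trace ((φ (ρ₁ g) - ρ₂ g) * ρ₂ h) = 0 := by
      intro h
      rw [sub_mul, Matrix.trace_sub, htr, ← _root_.map_mul, ← _root_.map_mul, hchar]
      ring
    have := hnd₂ _ hZ hz
    rwa [sub_eq_zero] at this
  refine ⟨φ, hmain, htr, hmem, fun x hx => ?_⟩
  have hzero : ∀ h, Matrix.trace (x * ρ₁ h) = 0 := by
    intro h
    rw [← htr x h, hx, zero_mul, Matrix.trace_zero]
  apply trace_nondeg
  intro Y
  exact trace_zero_on_span ρ₁ hzero (by rw [hspan₁]; trivial)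

lemma dep3 (a1 b1 a2 b2 a3 b3 : ℝ) : ∃ c1 c2 c3 : ℝ, ¬(c1 = 0 ∧ c2 = 0 ∧ c3 = 0) ∧
    c1*a1 + c2*a2 + c3*a3 = 0 ∧ c1*b1 + c2*b2 + c3*b3 = 0 := by
  by_cases h1 : a1 = 0 ∧ b1 = 0
  · exact ⟨1, 0, 0, by simp, by simp [h1.1], by simp [h1.2]⟩
  · have hv1 : (![a1, b1] : Fin 2 → ℝ) ≠ 0 := by
      intro h
      exact h1 ⟨by simpa using congrFun h 0, by simpa using congrFun h 1⟩
    by_cases h2 : a1*b2 - b1*a2 = 0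
    · obtain ⟨c, hc⟩ := colinear_of_det2 (u := ![a1,b1]) (v := ![a2,b2]) (by simpa using h2) hv1
      have hc0 : a2 = c * a1 := by simpa using congrFun hc 0
      have hc1 : b2 = c * b1 := by simpa using congrFun hc 1
      exact ⟨c, -1, 0, by simp, by rw [hc0]; ring, by rw [hc1]; ring⟩
    · obtain ⟨α, β, hab⟩ := cramer2 (u := ![a1,b1]) (v := ![a2,b2]) (by simpa using h2) ![a3,b3]
      have hc0 : a3 = α * a1 + β * a2 := by simpa using congrFun hab 0
      have hc1 : b3 = α * b1 + β * b2 := by simpa using congrFun hab 1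
      exact ⟨α, β, -1, by simp, by rw [hc0]; ring, by rw [hc1]; ring⟩

lemma mixed_false (ρ₁ ρ₂ : G →* M2) (hdet₂ : ∀ g, (ρ₂ g).det = 1)
    (hirr₂ : ¬ ∃ v : Fin 2 → ℝ, v ≠ 0 ∧ ∀ g, ∃ c : ℝ, (ρ₂ g).mulVec v = c • v)
    (hchar : ∀ g, Matrix.trace (ρ₁ g) = Matrix.trace (ρ₂ g))
    (hspan₁ : Submodule.span ℝ (Set.range ⇑ρ₁) = ⊤)
    (hc₂ : ∀ g h, ρ₂ g * ρ₂ h = ρ₂ h * ρ₂ g) : False := by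
  obtain ⟨g₀, hns⟩ := comm_nonscalar_exists ρ₂ hirr₂
  have hτ : (Matrix.trace (ρ₂ g₀))^2 < 4 := comm_trace_sq_lt ρ₂ hdet₂ hirr₂ hc₂ hns
  have hraw := comm_J_sq (hdet₂ g₀) hτ
  set T := Matrix.trace (ρ₂ g₀) with hT
  set S := Real.sqrt (4 - T^2)/2 with hS
  have hSpos : 0 < S := by
    have h4 : (0:ℝ) < 4 - T^2 := by linarith
    have := Real.sqrt_pos.2 h4
    rw [hS]; linarith
  set J := S⁻¹ • (ρ₂ g₀ - (T/2) • 1) with hJdef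
  have hJ2 : J * J = -1 := hraw
  have hJtr : Matrix.trace J = 0 := sq_neg_one_trace hJ2
  have hdecomp : ∀ g, ρ₂ g = ((Matrix.trace (ρ₂ g))/2) • 1 +
      (-(Matrix.trace (ρ₂ g * ρ₂ g₀) - (T/2) * Matrix.trace (ρ₂ g)) / (2 * S)) • J :=
    fun g => comm_coeffs hT (ne_of_gt hSpos) hJdef hJ2 (hc₂ g g₀)
  have hspan2 : Submodule.span ℝ (Set.range ⇑ρ₂) ≤ Submodule.span ℝ {(1:M2), J} := by
    rw [Submodule.span_le]
    rintro _ ⟨g, rfl⟩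
    rw [hdecomp g]
    exact Submodule.add_mem _
      (Submodule.smul_mem _ _ (Submodule.subset_span (Set.mem_insert _ _)))
      (Submodule.smul_mem _ _ (Submodule.subset_span (Set.mem_insert_of_mem _ rfl)))
  have hnd₂ : ∀ Z ∈ Submodule.span ℝ (Set.range ⇑ρ₂),
      (∀ h, Matrix.trace (Z * ρ₂ h) = 0) → Z = 0 := by
    intro Z hZ hz
    obtain ⟨a, b, hab⟩ := Submodule.mem_span_pair.1 (hspan2 hZ)
    have h1 : Matrix.trace (Z * 1) = 0 := by
      have := hz 1
      rwa [_root_.map_one] at this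
    have h2 : Matrix.trace (Z * J) = 0 := by
      rw [hJdef, mul_smul_comm, Matrix.trace_smul, mul_sub, Matrix.trace_sub,
        mul_smul_comm, Matrix.trace_smul]
      rw [hz g₀, h1]
      simp
    have e1 : Matrix.trace (Z * 1) = 2*a := by
      rw [← hab, mul_one, Matrix.trace_add, Matrix.trace_smul, Matrix.trace_smul, hJtr,
        Matrix.trace_one]
      simp; ring
    have e2 : Matrix.trace (Z * J) = -2*b := by
      have t1 : Matrix.trace (a • J) = 0 := by rw [Matrix.trace_smul, hJtr, smul_zero]
      have t2 : Matrix.trace (b • (-1:M2)) = -2*b := by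
        rw [Matrix.trace_smul, Matrix.trace_neg, Matrix.trace_one]
        simp
        ring
      rw [← hab, add_mul, smul_mul_assoc, smul_mul_assoc, one_mul, hJ2, Matrix.trace_add, t1, t2]
      ring
    have ha : a = 0 := by rw [e1] at h1; linarith
    have hb : b = 0 := by rw [e2] at h2; linarith
    rw [← hab, ha, hb]
    simp
  obtain ⟨φ, hφg, hφtr, hφmem, hφinj⟩ := phi_eq ρ₁ ρ₂ hchar hspan₁ hnd₂
  obtain ⟨a1, b1, h1⟩ := Submodule.mem_span_pair.1 (hspan2 (hφmem !![1,0;0,0]))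
  obtain ⟨a2, b2, h2⟩ := Submodule.mem_span_pair.1 (hspan2 (hφmem !![0,1;0,0]))
  obtain ⟨a3, b3, h3⟩ := Submodule.mem_span_pair.1 (hspan2 (hφmem !![0,0;1,0]))
  obtain ⟨c1, c2, c3, hcne, hca, hcb⟩ := dep3 a1 b1 a2 b2 a3 b3
  have hx : φ (c1 • !![1,0;0,0] + c2 • !![0,1;0,0] + c3 • !![0,0;1,0]) = 0 := by
    rw [map_add, map_add, LinearMap.map_smul, LinearMap.map_smul, LinearMap.map_smul, ← h1, ← h2, ← h3]
    have e : c1 • (a1•(1:M2)+b1•J) + c2 • (a2•1+b2•J) + c3 • (a3•1+b3•J)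
        = (c1*a1+c2*a2+c3*a3) • 1 + (c1*b1+c2*b2+c3*b3) • J := by module
    rw [e, hca, hcb]
    simp
  have hzero := hφinj _ hx
  apply hcne
  have k1 := congrFun (congrFun hzero 0) 0
  have k2 := congrFun (congrFun hzero 0) 1
  have k3 := congrFun (congrFun hzero 1) 0
  simp at k1 k2 k3
  exact ⟨k1, k2, k3⟩

lemma mulVec_ne_zero {M : M2} (h : M ≠ 0) : ∃ w : Fin 2 → ℝ, M.mulVec w ≠ 0 := by
  by_contra hc
  push_neg at hc
  apply h
  ext i j
  have h0 := congrFun (hc ![1,0]) i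
  have h1 := congrFun (hc ![0,1]) i
  rw [mulVec2] at h0 h1
  simp at h0 h1
  fin_cases j <;> simpa

lemma col_ext {A B : M2} (h0 : A.mulVec ![1,0] = B.mulVec ![1,0])
    (h1 : A.mulVec ![0,1] = B.mulVec ![0,1]) : A = B := by
  ext i j
  have e0 := congrFun h0 i
  have e1 := congrFun h1 i
  rw [mulVec2, mulVec2] at e0 e1
  simp at e0 e1
  fin_cases j <;> simpa

lemma matrix_decomp (X : M2) : X = X 0 0 • !![1,0;0,0] + X 0 1 • !![0,1;0,0]
    + X 1 0 • !![0,0;1,0] + X 1 1 • !![0,0;0,1] := by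
  ext i j
  fin_cases i <;> fin_cases j <;> simp

variable {G : Type} [Group G] in
lemma top_top_case (ρ₁ ρ₂ : G →* M2)
    (hchar : ∀ g, Matrix.trace (ρ₁ g) = Matrix.trace (ρ₂ g))
    (hspan₁ : Submodule.span ℝ (Set.range ⇑ρ₁) = ⊤)
    (hspan₂ : Submodule.span ℝ (Set.range ⇑ρ₂) = ⊤) :
    ∃ P : M2, (P.det = 1 ∨ P.det = -1) ∧ ∀ g, P * ρ₁ g * P⁻¹ = ρ₂ g := by
  have hnd₂ : ∀ Z ∈ Submodule.span ℝ (Set.range ⇑ρ₂),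
      (∀ h, Matrix.trace (Z * ρ₂ h) = 0) → Z = 0 := by
    intro Z _ hz
    apply trace_nondeg
    intro Y
    exact trace_zero_on_span ρ₂ hz (by rw [hspan₂]; trivial)
  obtain ⟨φ, hφg, hφtr, hφmem, hφinj⟩ := phi_eq ρ₁ ρ₂ hchar hspan₁ hnd₂
  have hmul : ∀ x y : M2, φ (x*y) = φ x * φ y := by
    intro x y
    have hx : x ∈ Submodule.span ℝ (Set.range ⇑ρ₁) := by rw [hspan₁]; trivial
    have hy : y ∈ Submodule.span ℝ (Set.range ⇑ρ₁) := by rw [hspan₁]; trivial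
    induction hx using Submodule.span_induction with
    | mem a ha =>
      induction hy using Submodule.span_induction with
      | mem b hb =>
        obtain ⟨g, rfl⟩ := ha
        obtain ⟨h, rfl⟩ := hb
        rw [← _root_.map_mul, hφg, hφg, hφg, _root_.map_mul]
      | zero => simp
      | add u v hu hv ihu ihv => rw [mul_add, map_add, map_add, ihu, ihv, mul_add]
      | smul r u hu ihu =>
        rw [mul_smul_comm, LinearMap.map_smul, LinearMap.map_smul, ihu, mul_smul_comm]
    | zero => simp
    | add u v hu hv ihu ihv => rw [add_mul, map_add, map_add, ihu, ihv, add_mul]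
    | smul r u hu ihu =>
      rw [smul_mul_assoc, LinearMap.map_smul, LinearMap.map_smul, ihu, smul_mul_assoc]
  -- matrix unit products
  have m1 : (!![1,0;0,0] : M2) * !![1,0;0,0] = !![1,0;0,0] := by
    ext i j; fin_cases i <;> fin_cases j <;> simp [mulapp]
  have m2 : (!![0,1;0,0] : M2) * !![1,0;0,0] = 0 := by
    ext i j; fin_cases i <;> fin_cases j <;> simp [mulapp]
  have m3 : (!![0,0;1,0] : M2) * !![1,0;0,0] = !![0,0;1,0] := by
    ext i j; fin_cases i <;> fin_cases j <;> simp [mulapp]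
  have m4 : (!![0,0;0,1] : M2) * !![1,0;0,0] = 0 := by
    ext i j; fin_cases i <;> fin_cases j <;> simp [mulapp]
  have m5 : (!![1,0;0,0] : M2) * !![0,0;1,0] = 0 := by
    ext i j; fin_cases i <;> fin_cases j <;> simp [mulapp]
  have m6 : (!![0,1;0,0] : M2) * !![0,0;1,0] = !![1,0;0,0] := by
    ext i j; fin_cases i <;> fin_cases j <;> simp [mulapp]
  have m7 : (!![0,0;1,0] : M2) * !![0,0;1,0] = 0 := by
    ext i j; fin_cases i <;> fin_cases j <;> simp [mulapp]
  have m8 : (!![0,0;0,1] : M2) * !![0,0;1,0] = !![0,0;1,0] := by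
    ext i j; fin_cases i <;> fin_cases j <;> simp [mulapp]
  have hF00ne : φ !![1,0;0,0] ≠ 0 := by
    intro h
    have := hφinj _ h
    have := congrFun (congrFun this 0) 0
    simp at this
  obtain ⟨w, hw⟩ := mulVec_ne_zero hF00ne
  have act : ∀ X Y : M2, (φ X).mulVec ((φ Y).mulVec w) = (φ (X*Y)).mulVec w := by
    intro X Y
    rw [Matrix.mulVec_mulVec, ← hmul]
  set p1 := (φ !![1,0;0,0]).mulVec w with hp1
  set p2 := (φ !![0,0;1,0]).mulVec w with hp2
  have a1 : (φ !![1,0;0,0]).mulVec p1 = p1 := by rw [hp1, act, m1]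
  have a2 : (φ !![0,1;0,0]).mulVec p1 = 0 := by
    rw [hp1, act, m2, _root_.map_zero, Matrix.zero_mulVec]
  have a3 : (φ !![0,0;1,0]).mulVec p1 = p2 := by rw [hp1, act, m3]
  have a4 : (φ !![0,0;0,1]).mulVec p1 = 0 := by
    rw [hp1, act, m4, _root_.map_zero, Matrix.zero_mulVec]
  have a5 : (φ !![1,0;0,0]).mulVec p2 = 0 := by
    rw [hp2, act, m5, _root_.map_zero, Matrix.zero_mulVec]
  have a6 : (φ !![0,1;0,0]).mulVec p2 = p1 := by rw [hp2, act, m6]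
  have a7 : (φ !![0,0;1,0]).mulVec p2 = 0 := by
    rw [hp2, act, m7, _root_.map_zero, Matrix.zero_mulVec]
  have a8 : (φ !![0,0;0,1]).mulVec p2 = p2 := by rw [hp2, act, m8]
  set P : M2 := !![p1 0, p2 0; p1 1, p2 1] with hP
  have hPc0 : P.mulVec ![1,0] = p1 := by
    funext i
    rw [mulVec2]
    fin_cases i <;> simp [hP]
  have hPc1 : P.mulVec ![0,1] = p2 := by
    funext i
    rw [mulVec2]
    fin_cases i <;> simp [hP]
  have hPdet : P.det ≠ 0 := by
    intro hzero
    rw [hP, Matrix.det_fin_two_of] at hzero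
    have hcol : p1 0 * p2 1 - p1 1 * p2 0 = 0 := by linarith
    obtain ⟨c, hc⟩ := colinear_of_det2 hcol hw
    have h5 : (φ !![1,0;0,0]).mulVec p2 = c • p1 := by
      rw [hc, Matrix.mulVec_smul, a1]
    rw [a5] at h5
    have hc0 : c = 0 := by
      rcases smul_eq_zero.1 h5.symm with h | h
      · exact h
      · exact absurd h hw
    have hp2z : p2 = 0 := by rw [hc, hc0, zero_smul]
    rw [hp2z] at a6
    rw [Matrix.mulVec_zero] at a6
    exact hw a6.symm
  -- intertwining on basis elements
  have cv1 : (!![1,0;0,0] : M2).mulVec ![1,0] = ![1,0] := by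
    funext i; rw [mulVec2]; fin_cases i <;> simp
  have cv2 : (!![1,0;0,0] : M2).mulVec ![0,1] = 0 := by
    funext i; rw [mulVec2]; fin_cases i <;> simp
  have cv3 : (!![0,1;0,0] : M2).mulVec ![1,0] = 0 := by
    funext i; rw [mulVec2]; fin_cases i <;> simp
  have cv4 : (!![0,1;0,0] : M2).mulVec ![0,1] = ![1,0] := by
    funext i; rw [mulVec2]; fin_cases i <;> simp
  have cv5 : (!![0,0;1,0] : M2).mulVec ![1,0] = ![0,1] := by
    funext i; rw [mulVec2]; fin_cases i <;> simp
  have cv6 : (!![0,0;1,0] : M2).mulVec ![0,1] = 0 := by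
    funext i; rw [mulVec2]; fin_cases i <;> simp
  have cv7 : (!![0,0;0,1] : M2).mulVec ![1,0] = 0 := by
    funext i; rw [mulVec2]; fin_cases i <;> simp
  have cv8 : (!![0,0;0,1] : M2).mulVec ![0,1] = ![0,1] := by
    funext i; rw [mulVec2]; fin_cases i <;> simp
  have b1 : φ !![1,0;0,0] * P = P * !![1,0;0,0] := by
    apply col_ext
    · rw [← Matrix.mulVec_mulVec, ← Matrix.mulVec_mulVec, hPc0, a1, cv1, hPc0]
    · rw [← Matrix.mulVec_mulVec, ← Matrix.mulVec_mulVec, hPc1, a5, cv2, Matrix.mulVec_zero]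
  have b2 : φ !![0,1;0,0] * P = P * !![0,1;0,0] := by
    apply col_ext
    · rw [← Matrix.mulVec_mulVec, ← Matrix.mulVec_mulVec, hPc0, a2, cv3, Matrix.mulVec_zero]
    · rw [← Matrix.mulVec_mulVec, ← Matrix.mulVec_mulVec, hPc1, a6, cv4, hPc0]
  have b3 : φ !![0,0;1,0] * P = P * !![0,0;1,0] := by
    apply col_ext
    · rw [← Matrix.mulVec_mulVec, ← Matrix.mulVec_mulVec, hPc0, a3, cv5, hPc1]
    · rw [← Matrix.mulVec_mulVec, ← Matrix.mulVec_mulVec, hPc1, a7, cv6, Matrix.mulVec_zero]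
  have b4 : φ !![0,0;0,1] * P = P * !![0,0;0,1] := by
    apply col_ext
    · rw [← Matrix.mulVec_mulVec, ← Matrix.mulVec_mulVec, hPc0, a4, cv7, Matrix.mulVec_zero]
    · rw [← Matrix.mulVec_mulVec, ← Matrix.mulVec_mulVec, hPc1, a8, cv8, hPc1]
  have hint : ∀ X : M2, φ X * P = P * X := by
    intro X
    conv_lhs => rw [matrix_decomp X]
    conv_rhs => rw [matrix_decomp X]
    simp only [map_add, LinearMap.map_smul, add_mul, mul_add, smul_mul_assoc, mul_smul_comm,
      b1, b2, b3, b4]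
  apply scale_conj hPdet ρ₁ ρ₂
  intro g
  have := hint (ρ₁ g)
  rw [hφg] at this
  exact this.symm

end GoldmanAux

/-- Goldman's rigidity: two irreducible representations G → SL(2,ℝ) with equal
character are conjugate by a matrix of determinant +1 or −1. -/
theorem goldman_real_character_rigidity
    (G : Type) [Group G]
    (ρ₁ ρ₂ : G →* Matrix (Fin 2) (Fin 2) ℝ)
    (hdet₁ : ∀ g, (ρ₁ g).det = 1) (hdet₂ : ∀ g, (ρ₂ g).det = 1)
    (hirr₁ : ¬ ∃ v : Fin 2 → ℝ, v ≠ 0 ∧ ∀ g, ∃ c : ℝ, (ρ₁ g).mulVec v = c • v)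
    (hirr₂ : ¬ ∃ v : Fin 2 → ℝ, v ≠ 0 ∧ ∀ g, ∃ c : ℝ, (ρ₂ g).mulVec v = c • v)
    (hchar : ∀ g, Matrix.trace (ρ₁ g) = Matrix.trace (ρ₂ g)) :
    ∃ P : Matrix (Fin 2) (Fin 2) ℝ, (P.det = 1 ∨ P.det = -1) ∧
      ∀ g, P * ρ₁ g * P⁻¹ = ρ₂ g := by
  rcases GoldmanAux.comm_or_top ρ₁ hirr₁ with hc₁ | ht₁
  · rcases GoldmanAux.comm_or_top ρ₂ hirr₂ with hc₂ | ht₂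
    · exact GoldmanAux.comm_comm_case ρ₁ ρ₂ hdet₁ hdet₂ hirr₁ hchar hc₁ hc₂
    · exact absurd (GoldmanAux.mixed_false ρ₂ ρ₁ hdet₁ hirr₁
        (fun g => (hchar g).symm) ht₂ hc₁) (by simp)
  · rcases GoldmanAux.comm_or_top ρ₂ hirr₂ with hc₂ | ht₂
    · exact absurd (GoldmanAux.mixed_false ρ₁ ρ₂ hdet₂ hirr₂ hchar ht₁ hc₂) (by simp)
    · exact GoldmanAux.top_top_case ρ₁ ρ₂ hchar ht₁ ht₂
end
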